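/- Let g > 0 and c = 1/(g+1). Let x* > 0 be the unique solution of ln(x* + c) = x*/(x* + c), and let h_c : [0, ∞) → ℝ be defined by h_c(x) = x/(2·ln 2·(x* + c)) for 0 ≤ x ≤ x* and h_c(x) = (1/2)·log₂(x + c) for x ≥ x*. Then for every x ≥ 0, (1/2)·log₂(1 + x) − h_c(x) ≤ max{ (1/2)·log₂(x* + c) − (x* − g/(g+1))/(2·ln 2·(x* + c)) , (1/2)·log₂(1 + (g/(g+1))/(x* + c)) }. -/

import Mathlib

open Real

/-- For `g > 0`, `c = 1/(g+1)`, `x*` the unique positive solution of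
`ln (x* + c) = x*/(x* + c)`, and `h_c` the envelope function, for every `x ≥ 0` the gap
`(1/2) log₂ (1 + x) − h_c x` is bounded by the maximum of
`(1/2) log₂ (x* + c) − (x* − g/(g+1))/(2 ln 2 (x* + c))` and
`(1/2) log₂ (1 + (g/(g+1))/(x* + c))`. -/
theorem stmt_5 (g : ℝ) (hg : 0 < g) (c : ℝ) (hc : c = 1 / (g + 1))
    (xs : ℝ) (hxs : 0 < xs) (heq : Real.log (xs + c) = xs / (xs + c))
    (h : ℝ → ℝ)
    (hlin : ∀ x : ℝ, 0 ≤ x → x ≤ xs → h x = x / (2 * Real.log 2 * (xs + c)))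
    (hlog : ∀ x : ℝ, xs ≤ x → h x = (1 / 2) * Real.logb 2 (x + c)) :
    ∀ x : ℝ, 0 ≤ x →
      (1 / 2) * Real.logb 2 (1 + x) - h x ≤
        max ((1 / 2) * Real.logb 2 (xs + c) -
              (xs - g / (g + 1)) / (2 * Real.log 2 * (xs + c)))
            ((1 / 2) * Real.logb 2 (1 + (g / (g + 1)) / (xs + c))) := by
  intro x hx
  have hg1 : (0:ℝ) < g + 1 := by linarith
  have hcpos : 0 < c := by rw [hc]; positivity
  have hA : 0 < xs + c := by linarith
  have hL2 : 0 < Real.log 2 := Real.log_pos (by norm_num)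
  have hd : g / (g + 1) = 1 - c := by rw [hc]; field_simp; ring
  rcases le_total x xs with hxle | hxge
  · refine le_max_of_le_left ?_
    rw [hlin x hx hxle]
    have h1x : 0 < 1 + x := by linarith
    have key : Real.log (1 + x) - Real.log (xs + c) ≤ (1 + x) / (xs + c) - 1 := by
      have := Real.log_le_sub_one_of_pos (x := (1 + x) / (xs + c)) (by positivity)
      rwa [Real.log_div (by positivity) (by positivity)] at this
    rw [Real.logb, Real.logb, hd]
    have final : 1 / 2 * (Real.log (1 + x) / Real.log 2) - x / (2 * Real.log 2 * (xs + c)) -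
        (1 / 2 * (Real.log (xs + c) / Real.log 2) - (xs - (1 - c)) / (2 * Real.log 2 * (xs + c))) =
        (Real.log (1 + x) - Real.log (xs + c) - ((1 + x) / (xs + c) - 1)) / (2 * Real.log 2) := by
      field_simp
      ring
    have hnp : (Real.log (1 + x) - Real.log (xs + c) - ((1 + x) / (xs + c) - 1)) /
        (2 * Real.log 2) ≤ 0 :=
      div_nonpos_of_nonpos_of_nonneg (by linarith) (by positivity)
    linarith [final, hnp]
  · refine le_max_of_le_right ?_
    rw [hlog x hxge]
    have hxc : 0 < x + c := by linarith
    have h1x : 0 < 1 + x := by linarith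
    have hq : 0 < 1 + (g / (g + 1)) / (xs + c) := by
      have : 0 ≤ g / (g + 1) / (xs + c) := by positivity
      linarith
    rw [← mul_sub, ← Real.logb_div (by positivity) (by positivity)]
    have hmono : (1 + x) / (x + c) ≤ 1 + (g / (g + 1)) / (xs + c) := by
      rw [hd, div_le_iff₀ hxc]
      have h1 : (1 - c) / (xs + c) * (x + c) ≥ (1 - c) / (xs + c) * (xs + c) := by
        have hc1 : c < 1 := by rw [hc, div_lt_one hg1]; linarith
        have hnn : 0 ≤ (1 - c) / (xs + c) := by
          apply div_nonneg <;> linarith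
        exact mul_le_mul_of_nonneg_left (by linarith) hnn
      have h2 : (1 - c) / (xs + c) * (xs + c) = 1 - c := by field_simp
      nlinarith [h1, h2]
    have := Real.logb_le_logb_of_le (by norm_num : (1:ℝ) < 2) (by positivity) hmono
    linarith [this]
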